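/- For every integer n ≥ 2, the function a ↦ T(a) := sinh(a) · ∫_1^∞ (v^{2n−2} − 1)^{−1/2} · (sinh²(a)·v² + 1)^{−1/2} dv is differentiable on (0, ∞) with derivative T'(a) = cosh(a) · ∫_1^∞ (v^{2n−2} − 1)^{−1/2} · (sinh²(a)·v² + 1)^{−3/2} dv, which is strictly positive; hence T is strictly increasing on (0, ∞). -/

import Mathlib

open MeasureTheory Set Metric

private lemma phi_deriv {v : ℝ} (hv : 1 < v) :
    HasDerivAt (fun x : ℝ => 2 * Real.sqrt (1 - 1/x))
      (1 / (Real.sqrt (v-1) * (Real.sqrt v * v))) v := by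
  have hv0 : (0:ℝ) < v := by linarith
  have h1 : HasDerivAt (fun x : ℝ => 1 - 1/x) (1/v^2) v := by
    have := (hasDerivAt_inv (ne_of_gt hv0)).const_sub 1
    simpa [one_div] using this
  have hne : 1 - 1/v ≠ 0 := by
    have : 1/v < 1 := by rw [div_lt_one hv0]; linarith
    linarith
  have h2 := (h1.sqrt hne).const_mul 2
  refine h2.congr_deriv ?_
  symm
  have hs : Real.sqrt (1 - 1/v) = Real.sqrt (v-1) / Real.sqrt v := by
    rw [show (1 - 1/v) = (v-1)/v by field_simp, Real.sqrt_div (by linarith)]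
  rw [hs]
  have h3 : Real.sqrt (v-1) > 0 := Real.sqrt_pos.2 (by linarith)
  have h4 : Real.sqrt v > 0 := Real.sqrt_pos.2 hv0
  have h5 : Real.sqrt v * Real.sqrt v = v := Real.mul_self_sqrt hv0.le
  field_simp
  linear_combination (-1) * h5

private lemma phi_integrable :
    IntegrableOn (fun v : ℝ => 1 / (Real.sqrt (v-1) * (Real.sqrt v * v))) (Set.Ioi 1) := by
  have hcont : ContinuousWithinAt (fun x : ℝ => 2 * Real.sqrt (1 - 1/x)) (Set.Ici 1) 1 := by
    apply ContinuousAt.continuousWithinAt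
    have : ContinuousAt (fun x : ℝ => 1 - 1/x) 1 := by
      apply ContinuousAt.sub continuousAt_const
      exact ContinuousAt.div continuousAt_const continuousAt_id one_ne_zero
    exact (continuousAt_const.mul (Real.continuous_sqrt.continuousAt.comp this))
  have hlim : Filter.Tendsto (fun x : ℝ => 2 * Real.sqrt (1 - 1/x)) Filter.atTop (nhds 2) := by
    have h1 : Filter.Tendsto (fun x : ℝ => 1 - 1/x) Filter.atTop (nhds 1) := by
      simpa [one_div] using Filter.Tendsto.const_sub (1:ℝ) tendsto_inv_atTop_zero
    have h2 := (h1.sqrt).const_mul (2:ℝ)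
    simpa using h2
  refine integrableOn_Ioi_deriv_of_nonneg hcont (fun x hx => phi_deriv hx) ?_ hlim
  · intro x hx
    have hx1 : (1:ℝ) < x := hx
    positivity

private lemma deriv_pointwise {A : ℝ} (hA : 0 < A) (v c : ℝ) :
    HasDerivAt (fun x : ℝ => Real.sinh x * (1 / (A * Real.sqrt (Real.sinh x ^ 2 * v ^ 2 + 1))))
      (Real.cosh c * (1 / (A * Real.sqrt (Real.sinh c ^ 2 * v ^ 2 + 1) ^ 3))) c := by
  have hu : ∀ x : ℝ, 0 < Real.sinh x ^ 2 * v ^ 2 + 1 := fun x => by positivity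
  have h1 : HasDerivAt (fun x : ℝ => Real.sinh x ^ 2 * v ^ 2 + 1)
      (((2:ℕ) * Real.sinh c ^ 1 * Real.cosh c) * v ^ 2) c :=
    (((Real.hasDerivAt_sinh c).pow 2).mul_const _).add_const _
  have h2 := h1.sqrt (ne_of_gt (hu c))
  have h3 := h2.const_mul A
  set S := Real.sqrt (Real.sinh c ^ 2 * v ^ 2 + 1) with hSdef
  have hS0 : 0 < S := Real.sqrt_pos.2 (hu c)
  have hS2 : S ^ 2 = Real.sinh c ^ 2 * v ^ 2 + 1 := Real.sq_sqrt (hu c).le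
  have hden : A * S ≠ 0 := by positivity
  have h4 := (Real.hasDerivAt_sinh c).div h3 hden
  have heq : (fun x : ℝ => Real.sinh x * (1 / (A * Real.sqrt (Real.sinh x ^ 2 * v ^ 2 + 1))))
      = fun x : ℝ => Real.sinh x / (A * Real.sqrt (Real.sinh x ^ 2 * v ^ 2 + 1)) :=
    funext fun x => mul_one_div _ _
  rw [heq, ← hSdef] at *
  refine h4.congr_deriv ?_
  symm
  have hAne : A ≠ 0 := ne_of_gt hA
  have hSne : S ≠ 0 := ne_of_gt hS0
  field_simp
  ring_nf
  linear_combination (-2) * hS2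

private lemma sqrt_pow_lb {m : ℕ} (hm : 2 ≤ m) {v : ℝ} (hv : 1 < v) :
    Real.sqrt (v-1) * Real.sqrt v ≤ Real.sqrt (v ^ m - 1) := by
  rw [← Real.sqrt_mul (by linarith : (0:ℝ) ≤ v - 1)]
  apply Real.sqrt_le_sqrt
  have h1 : v^2 ≤ v^m := pow_le_pow_right₀ hv.le hm
  nlinarith

private lemma sqrt_sinh_lb {s v : ℝ} (hs : 0 ≤ s) (hv : 0 ≤ v) :
    s * v ≤ Real.sqrt (s ^ 2 * v ^ 2 + 1) := by
  have : s * v = Real.sqrt ((s*v)^2) := (Real.sqrt_sq (by positivity)).symm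
  rw [this]
  apply Real.sqrt_le_sqrt
  nlinarith

private lemma sqrt_sinh_lb3 {s v : ℝ} (hs : 0 ≤ s) (hv : 0 ≤ v) :
    s * v ≤ Real.sqrt (s ^ 2 * v ^ 2 + 1) ^ 3 := by
  have h1 := sqrt_sinh_lb hs hv
  have h2 : (1:ℝ) ≤ Real.sqrt (s ^ 2 * v ^ 2 + 1) := by
    have := Real.sqrt_le_sqrt (show (1:ℝ) ≤ s ^ 2 * v ^ 2 + 1 by nlinarith)
    rwa [Real.sqrt_one] at this
  have h3 : (1:ℝ) ≤ Real.sqrt (s ^ 2 * v ^ 2 + 1) ^ 2 := by nlinarith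
  calc s * v ≤ Real.sqrt (s ^ 2 * v ^ 2 + 1) := h1
    _ = Real.sqrt (s ^ 2 * v ^ 2 + 1) * 1 := by ring
    _ ≤ Real.sqrt (s ^ 2 * v ^ 2 + 1) * Real.sqrt (s ^ 2 * v ^ 2 + 1) ^ 2 :=
        mul_le_mul_of_nonneg_left h3 (Real.sqrt_nonneg _)
    _ = Real.sqrt (s ^ 2 * v ^ 2 + 1) ^ 3 := by ring

private lemma main_gen (m : ℕ) (hm : 2 ≤ m) :
    (∀ a ∈ Set.Ioi (0 : ℝ),
      HasDerivAt
        (fun c => Real.sinh c *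
          ∫ v in Set.Ioi (1 : ℝ),
            1 / (Real.sqrt (v ^ m - 1) * Real.sqrt (Real.sinh c ^ 2 * v ^ 2 + 1)))
        (Real.cosh a *
          ∫ v in Set.Ioi (1 : ℝ),
            1 / (Real.sqrt (v ^ m - 1) *
              Real.sqrt (Real.sinh a ^ 2 * v ^ 2 + 1) ^ 3)) a ∧
      0 < Real.cosh a *
          ∫ v in Set.Ioi (1 : ℝ),
            1 / (Real.sqrt (v ^ m - 1) *
              Real.sqrt (Real.sinh a ^ 2 * v ^ 2 + 1) ^ 3)) ∧
    StrictMonoOn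
      (fun a => Real.sinh a *
        ∫ v in Set.Ioi (1 : ℝ),
          1 / (Real.sqrt (v ^ m - 1) * Real.sqrt (Real.sinh a ^ 2 * v ^ 2 + 1)))
      (Set.Ioi 0) := by
  have hA : ∀ v : ℝ, 1 < v → 0 < Real.sqrt (v ^ m - 1) := by
    intro v hv
    apply Real.sqrt_pos.2
    have : (1:ℝ) < v ^ m := one_lt_pow₀ hv (by omega)
    linarith
  set F : ℝ → ℝ → ℝ := fun c v =>
    Real.sinh c * (1 / (Real.sqrt (v ^ m - 1) * Real.sqrt (Real.sinh c ^ 2 * v ^ 2 + 1)))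
    with hF
  set F' : ℝ → ℝ → ℝ := fun c v =>
    Real.cosh c * (1 / (Real.sqrt (v ^ m - 1) * Real.sqrt (Real.sinh c ^ 2 * v ^ 2 + 1) ^ 3))
    with hF'
  have c1 : Continuous fun v : ℝ => Real.sqrt (v ^ m - 1) :=
    Real.continuous_sqrt.comp ((continuous_pow m).sub continuous_const)
  have c2 : ∀ c : ℝ, Continuous fun v : ℝ => Real.sqrt (Real.sinh c ^ 2 * v ^ 2 + 1) := by
    intro c
    apply Real.continuous_sqrt.comp
    continuity
  have hmeasF : ∀ c : ℝ, AEStronglyMeasurable (F c) (volume.restrict (Set.Ioi 1)) := by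
    intro c
    refine Measurable.aestronglyMeasurable ?_
    rw [hF]
    simp only [one_div]
    exact measurable_const.mul ((c1.mul (c2 c)).measurable.inv)
  have hmeasF' : ∀ c : ℝ, AEStronglyMeasurable (F' c) (volume.restrict (Set.Ioi 1)) := by
    intro c
    refine Measurable.aestronglyMeasurable ?_
    rw [hF']
    simp only [one_div]
    exact measurable_const.mul ((c1.mul ((c2 c).pow 3)).measurable.inv)
  -- main derivative + integrability statement
  have main : ∀ a ∈ Set.Ioi (0:ℝ),
      HasDerivAt (fun c => ∫ v in Set.Ioi (1:ℝ), F c v)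
        (∫ v in Set.Ioi (1:ℝ), F' a v) a
      ∧ Integrable (F' a) (volume.restrict (Set.Ioi 1)) := by
    intro a ha
    have ha0 : (0:ℝ) < a := ha
    have hs0 : (0:ℝ) < Real.sinh (a/2) := Real.sinh_pos_iff.2 (by linarith)
    set s0 := Real.sinh (a/2) with hs0def
    set M := Real.cosh (3*a/2) with hMdef
    have hM0 : (0:ℝ) < M := Real.cosh_pos _
    -- integrability of F a
    have hFa_int : Integrable (F a) (volume.restrict (Set.Ioi 1)) := by
      apply Integrable.mono' (phi_integrable) (hmeasF a)
      rw [ae_restrict_iff' measurableSet_Ioi]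
      apply Filter.Eventually.of_forall
      intro v hv
      have hv1 : (1:ℝ) < v := hv
      have hv0 : (0:ℝ) < v := by linarith
      have hAv := hA v hv1
      have hsa : (0:ℝ) < Real.sinh a := Real.sinh_pos_iff.2 ha0
      have hd1 : Real.sqrt (v-1) * (Real.sqrt v * v) * Real.sinh a
          ≤ Real.sqrt (v^m-1) * Real.sqrt (Real.sinh a ^2 * v^2 + 1) := by
        calc Real.sqrt (v-1) * (Real.sqrt v * v) * Real.sinh a
            = (Real.sqrt (v-1) * Real.sqrt v) * (Real.sinh a * v) := by ring
          _ ≤ Real.sqrt (v^m-1) * Real.sqrt (Real.sinh a ^2 * v^2 + 1) :=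
              mul_le_mul (sqrt_pow_lb hm hv1) (sqrt_sinh_lb hsa.le hv0.le)
                (by positivity) (Real.sqrt_nonneg _)
      have hpos : (0:ℝ) < Real.sqrt (v-1) * (Real.sqrt v * v) * Real.sinh a := by
        have := Real.sqrt_pos.2 (show (0:ℝ) < v - 1 by linarith)
        have := Real.sqrt_pos.2 hv0
        positivity
      have hq1 : (0:ℝ) < Real.sqrt (v-1) := Real.sqrt_pos.2 (by linarith)
      have hq2 : (0:ℝ) < Real.sqrt v := Real.sqrt_pos.2 hv0
      have hb : F a v ≤ 1 / (Real.sqrt (v-1) * (Real.sqrt v * v)) := by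
        rw [hF]
        simp only [mul_one_div]
        rw [div_le_div_iff₀ (lt_of_lt_of_le hpos hd1) (by positivity)]
        calc Real.sinh a * (Real.sqrt (v-1) * (Real.sqrt v * v))
            = Real.sqrt (v-1) * (Real.sqrt v * v) * Real.sinh a := by ring
          _ ≤ Real.sqrt (v^m-1) * Real.sqrt (Real.sinh a ^2 * v^2 + 1) := hd1
          _ = 1 * (Real.sqrt (v^m-1) * Real.sqrt (Real.sinh a ^2 * v^2 + 1)) := by ring
      rw [Real.norm_eq_abs, abs_of_nonneg (by rw [hF]; positivity)]
      exact hb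
    -- uniform bound on F'
    have key := hasDerivAt_integral_of_dominated_loc_of_deriv_le (μ := volume.restrict (Set.Ioi 1))
      (F := F) (F' := F') (x₀ := a) (s := Metric.ball a (a/2))
      (bound := fun v => (M / s0) * (1 / (Real.sqrt (v-1) * (Real.sqrt v * v))))
      (Metric.ball_mem_nhds a (by positivity : (0:ℝ) < a/2))
      (Filter.Eventually.of_forall hmeasF) hFa_int (hmeasF' a)
      ?_ ((phi_integrable.const_mul _)) ?_
    · exact ⟨key.2, key.1⟩
    · -- bound
      rw [ae_restrict_iff' measurableSet_Ioi]
      apply Filter.Eventually.of_forall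
      intro v hv c hc
      have hv1 : (1:ℝ) < v := hv
      have hv0 : (0:ℝ) < v := by linarith
      rw [Metric.mem_ball, Real.dist_eq, abs_sub_lt_iff] at hc
      have hcl : a/2 < c := by linarith [hc.2]
      have hcu : c < 3*a/2 := by linarith [hc.1]
      have hsc : s0 ≤ Real.sinh c := Real.sinh_le_sinh.2 hcl.le
      have hcc : Real.cosh c ≤ M := by
        rw [hMdef]
        apply Real.cosh_le_cosh.2
        rw [abs_of_pos (by linarith), abs_of_pos (by linarith)]
        linarith
      have hAv := hA v hv1
      have hd1 : Real.sqrt (v-1) * (Real.sqrt v * v) * s0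
          ≤ Real.sqrt (v^m-1) * Real.sqrt (Real.sinh c ^2 * v^2 + 1) ^ 3 := by
        calc Real.sqrt (v-1) * (Real.sqrt v * v) * s0
            = (Real.sqrt (v-1) * Real.sqrt v) * (s0 * v) := by ring
          _ ≤ (Real.sqrt (v^m-1)) * (Real.sinh c * v) :=
              mul_le_mul (sqrt_pow_lb hm hv1)
                (mul_le_mul_of_nonneg_right hsc hv0.le) (by positivity) (Real.sqrt_nonneg _)
          _ ≤ Real.sqrt (v^m-1) * Real.sqrt (Real.sinh c ^2 * v^2 + 1) ^ 3 :=
              mul_le_mul_of_nonneg_left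
                (sqrt_sinh_lb3 (by linarith : (0:ℝ) ≤ Real.sinh c) hv0.le) hAv.le
      have hpos : (0:ℝ) < Real.sqrt (v-1) * (Real.sqrt v * v) * s0 := by
        have := Real.sqrt_pos.2 (show (0:ℝ) < v - 1 by linarith)
        have := Real.sqrt_pos.2 hv0
        positivity
      have hq1 : (0:ℝ) < Real.sqrt (v-1) := Real.sqrt_pos.2 (by linarith)
      have hq2 : (0:ℝ) < Real.sqrt v := Real.sqrt_pos.2 hv0
      rw [Real.norm_eq_abs, abs_of_nonneg (by rw [hF']; positivity)]
      rw [hF']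
      simp only [mul_one_div]
      rw [div_le_div_iff₀ (lt_of_lt_of_le hpos hd1) (by positivity)]
      have hEpos : (0:ℝ) < Real.sqrt (v-1) * (Real.sqrt v * v) := by positivity
      calc Real.cosh c * (Real.sqrt (v-1) * (Real.sqrt v * v))
          ≤ M * (Real.sqrt (v-1) * (Real.sqrt v * v)) :=
            mul_le_mul_of_nonneg_right hcc hEpos.le
        _ = M / s0 * (Real.sqrt (v-1) * (Real.sqrt v * v) * s0) := by
            field_simp
        _ ≤ M / s0 * (Real.sqrt (v^m-1) * Real.sqrt (Real.sinh c ^2 * v^2 + 1) ^ 3) :=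
            mul_le_mul_of_nonneg_left hd1 (by positivity)
    · -- differentiability
      rw [ae_restrict_iff' measurableSet_Ioi]
      apply Filter.Eventually.of_forall
      intro v hv c _
      exact deriv_pointwise (hA v hv) v c
  -- convert to goal shapes
  have hfun : ∀ c : ℝ, (Real.sinh c *
      ∫ v in Set.Ioi (1:ℝ), 1 / (Real.sqrt (v ^ m - 1) * Real.sqrt (Real.sinh c ^ 2 * v ^ 2 + 1)))
      = ∫ v in Set.Ioi (1:ℝ), F c v := fun c => (integral_const_mul _ _).symm
  have hfun' : ∀ a : ℝ, (Real.cosh a *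
      ∫ v in Set.Ioi (1:ℝ), 1 / (Real.sqrt (v ^ m - 1) * Real.sqrt (Real.sinh a ^ 2 * v ^ 2 + 1) ^ 3))
      = ∫ v in Set.Ioi (1:ℝ), F' a v := fun a => (integral_const_mul _ _).symm
  have hderiv : ∀ a ∈ Set.Ioi (0:ℝ),
      HasDerivAt (fun c => Real.sinh c *
          ∫ v in Set.Ioi (1:ℝ),
            1 / (Real.sqrt (v ^ m - 1) * Real.sqrt (Real.sinh c ^ 2 * v ^ 2 + 1)))
        (Real.cosh a *
          ∫ v in Set.Ioi (1:ℝ),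
            1 / (Real.sqrt (v ^ m - 1) * Real.sqrt (Real.sinh a ^ 2 * v ^ 2 + 1) ^ 3)) a := by
    intro a ha
    rw [hfun']
    have := (main a ha).1
    convert this using 1
    funext c
    exact hfun c
  have hpos : ∀ a ∈ Set.Ioi (0:ℝ),
      0 < Real.cosh a *
          ∫ v in Set.Ioi (1:ℝ),
            1 / (Real.sqrt (v ^ m - 1) * Real.sqrt (Real.sinh a ^ 2 * v ^ 2 + 1) ^ 3) := by
    intro a ha
    apply mul_pos (Real.cosh_pos _)
    set f : ℝ → ℝ := fun v =>
      1 / (Real.sqrt (v ^ m - 1) * Real.sqrt (Real.sinh a ^ 2 * v ^ 2 + 1) ^ 3) with hfdef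
    have hint : IntegrableOn f (Set.Ioi 1) := by
      have h3 := (main a ha).2.const_mul (Real.cosh a)⁻¹
      have heq : (fun v => (Real.cosh a)⁻¹ * F' a v) = f := by
        funext v
        rw [hF', hfdef]
        rw [← mul_assoc, inv_mul_cancel₀ (ne_of_gt (Real.cosh_pos _)), one_mul]
      rwa [heq] at h3
    rw [setIntegral_pos_iff_support_of_nonneg_ae ?_ hint]
    · apply lt_of_lt_of_le _ (measure_mono (show Set.Ioi (1:ℝ) ⊆ Function.support f ∩ Set.Ioi 1 from ?_))
      · rw [Real.volume_Ioi]; exact ENNReal.zero_lt_top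
      · intro v hv
        refine ⟨?_, hv⟩
        have hv1 : (1:ℝ) < v := hv
        have hAv := hA v hv1
        have hB : (0:ℝ) < Real.sqrt (Real.sinh a ^ 2 * v ^ 2 + 1) := Real.sqrt_pos.2 (by positivity)
        simp only [Function.mem_support, hfdef]
        positivity
    · apply Filter.Eventually.of_forall
      intro v
      simp only [hfdef, Pi.zero_apply]
      positivity
  refine ⟨fun a ha => ⟨hderiv a ha, hpos a ha⟩, ?_⟩
  apply strictMonoOn_of_deriv_pos (convex_Ioi 0)
  · intro x hx
    exact ((hderiv x hx).differentiableAt.continuousAt).continuousWithinAt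
  · intro x hx
    rw [interior_Ioi] at hx
    rw [(hderiv x hx).deriv]
    exact hpos x hx

theorem stmt_7 (n : ℕ) (hn : 2 ≤ n) :
    (∀ a ∈ Set.Ioi (0 : ℝ),
      HasDerivAt
        (fun c => Real.sinh c *
          ∫ v in Set.Ioi (1 : ℝ),
            1 / (Real.sqrt (v ^ (2 * n - 2) - 1) * Real.sqrt (Real.sinh c ^ 2 * v ^ 2 + 1)))
        (Real.cosh a *
          ∫ v in Set.Ioi (1 : ℝ),
            1 / (Real.sqrt (v ^ (2 * n - 2) - 1) *
              Real.sqrt (Real.sinh a ^ 2 * v ^ 2 + 1) ^ 3)) a ∧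
      0 < Real.cosh a *
          ∫ v in Set.Ioi (1 : ℝ),
            1 / (Real.sqrt (v ^ (2 * n - 2) - 1) *
              Real.sqrt (Real.sinh a ^ 2 * v ^ 2 + 1) ^ 3)) ∧
    StrictMonoOn
      (fun a => Real.sinh a *
        ∫ v in Set.Ioi (1 : ℝ),
          1 / (Real.sqrt (v ^ (2 * n - 2) - 1) * Real.sqrt (Real.sinh a ^ 2 * v ^ 2 + 1)))
      (Set.Ioi 0) := by
  exact main_gen (2 * n - 2) (by omega)
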